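/- arXiv:0810.4727 — 4 statements merged into one kernel-verified Lean document; each statement's English description precedes it below -/
import Mathlib

section
/- Let θ > 1 and N ≥ 1 be given, and for k = 0,1,...,N define L(θ,k) = Σ_{i=0}^{k} C(N,i)(1 - 1/θ)^i (1/θ)^{N-i} and L_P(θ,k) = Σ_{i=0}^{k} ((N ln θ)^i / i!) exp(−N ln θ). Then L(θ,0) = L_P(θ,0), and L(θ,k) > L_P(θ,k) for every k = 1,...,N. -/
open Finset

noncomputable def bcdf (θ : ℝ) (n k : ℕ) : ℝ :=
  ∑ i ∈ range (k+1), (n.choose i : ℝ) * (1 - 1/θ) ^ i * (1/θ) ^ (n - i)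

noncomputable def pcdf (θ : ℝ) (n k : ℕ) : ℝ :=
  ∑ i ∈ range (k+1),
    ((n : ℝ) * Real.log θ) ^ i / (Nat.factorial i) * Real.exp (-((n : ℝ) * Real.log θ))

lemma sum_reindex (f : ℕ → ℕ → ℝ) :
    ∀ k, ∑ i ∈ range (k+1), ∑ j ∈ range (i+1), f j (i-j)
      = ∑ j ∈ range (k+1), ∑ m ∈ range (k-j+1), f j m := by
  intro k
  induction k with
  | zero => simp
  | succ k ih =>
    rw [sum_range_succ, ih, sum_range_succ (fun j => ∑ m ∈ range (k+1-j+1), f j m) (k+1),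
      sum_range_succ (fun j => f j (k+1-j)) (k+1)]
    simp only [Nat.sub_self]
    rw [← add_assoc]
    congr 1
    · rw [← sum_add_distrib]
      apply sum_congr rfl
      intro j hj
      rw [mem_range] at hj
      have h1 : k + 1 - j = (k - j) + 1 := by omega
      rw [h1, sum_range_succ (fun m => f j m) (k-j+1)]
    · simp

lemma bcdf_zero (θ : ℝ) (n : ℕ) : bcdf θ n 0 = (1/θ)^n := by
  simp [bcdf]

lemma pcdf_zero (θ : ℝ) (hθ : 0 < θ) (n : ℕ) : pcdf θ n 0 = (1/θ)^n := by
  simp only [pcdf, range_one, sum_singleton, pow_zero, Nat.factorial_zero, Nat.cast_one,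
    div_one, one_mul]
  rw [show -((n:ℝ) * Real.log θ) = (n:ℝ) * (-Real.log θ) by ring, Real.exp_nat_mul,
    Real.exp_neg, Real.exp_log hθ]
  simp [one_div]

lemma pcdf_succ (θ : ℝ) (n k : ℕ) :
    pcdf θ (n+1) k
      = ∑ j ∈ range (k+1),
          (Real.log θ) ^ j / (Nat.factorial j) * Real.exp (-Real.log θ) * pcdf θ n (k - j) := by
  set μ := Real.log θ with hμdef
  have key : ∀ i : ℕ,
      (((n:ℝ)+1) * μ) ^ i / (Nat.factorial i) * Real.exp (-(((n:ℝ)+1) * μ))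
        = ∑ j ∈ range (i+1), μ^j / (Nat.factorial j) * Real.exp (-μ) *
            (((n:ℝ) * μ)^(i-j) / (Nat.factorial (i-j)) * Real.exp (-((n:ℝ) * μ))) := by
    intro i
    have hexp : Real.exp (-(((n:ℝ)+1) * μ)) = Real.exp (-μ) * Real.exp (-((n:ℝ)*μ)) := by
      rw [← Real.exp_add]; ring_nf
    rw [hexp, show ((n:ℝ)+1)*μ = μ + (n:ℝ)*μ by ring, add_pow, sum_div, sum_mul]
    apply sum_congr rfl
    intro j hj
    rw [mem_range] at hj
    have hji : j ≤ i := Nat.lt_succ_iff.mp hj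
    have hfac : (i.choose j : ℝ) * (Nat.factorial j : ℝ) * (Nat.factorial (i-j) : ℝ)
        = (Nat.factorial i : ℝ) := by
      exact_mod_cast congrArg (Nat.cast (R := ℝ)) (Nat.choose_mul_factorial_mul_factorial hji)
    have h1 : (Nat.factorial j : ℝ) ≠ 0 := Nat.cast_ne_zero.mpr (Nat.factorial_ne_zero j)
    have h2 : (Nat.factorial (i-j) : ℝ) ≠ 0 := Nat.cast_ne_zero.mpr (Nat.factorial_ne_zero _)
    have h3 : (Nat.factorial i : ℝ) ≠ 0 := Nat.cast_ne_zero.mpr (Nat.factorial_ne_zero i)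
    field_simp
    linear_combination (μ^j * ((n:ℝ)*μ)^(i-j)) * hfac
  unfold pcdf
  push_cast
  rw [sum_congr rfl (fun i _ => key i),
    sum_reindex (fun j m => μ^j / (Nat.factorial j) * Real.exp (-μ) *
      (((n:ℝ) * μ)^m / (Nat.factorial m) * Real.exp (-((n:ℝ) * μ)))) k]
  apply sum_congr rfl
  intro j _
  rw [mul_sum]

lemma bcdf_succ (θ : ℝ) (n k : ℕ) :
    bcdf θ (n+1) (k+1) = (1/θ) * bcdf θ n (k+1) + (1 - 1/θ) * bcdf θ n k := by
  unfold bcdf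
  rw [mul_sum, mul_sum,
    sum_range_succ' (fun i => ((n+1).choose i : ℝ) * (1-1/θ)^i * (1/θ)^(n+1-i)) (k+1),
    sum_range_succ' (fun i => (1/θ) * ((n.choose i : ℝ) * (1-1/θ)^i * (1/θ)^(n-i))) (k+1)]
  have hlast : ((n+1).choose 0 : ℝ) * (1-1/θ)^0 * (1/θ)^(n+1-0)
      = (1/θ) * ((n.choose 0 : ℝ) * (1-1/θ)^0 * (1/θ)^(n-0)) := by
    simp [pow_succ]; ring
  rw [hlast, add_right_comm]
  congr 1
  rw [← sum_add_distrib]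
  apply sum_congr rfl
  intro i _
  have hp : ((n+1).choose (i+1) : ℝ) = (n.choose i : ℝ) + (n.choose (i+1) : ℝ) := by
    exact_mod_cast congrArg (Nat.cast (R := ℝ)) (Nat.choose_succ_succ n i)
  have he : n + 1 - (i + 1) = n - i := by omega
  rw [he, hp]
  by_cases hi : i + 1 ≤ n
  · have h2 : n - i = (n - (i+1)) + 1 := by omega
    rw [h2, pow_succ]
    ring
  · have h0 : (n.choose (i+1) : ℝ) = 0 := by
      rw [Nat.choose_eq_zero_of_lt (by omega)]; simp
    rw [h0]
    ring

lemma term_nonneg (θ : ℝ) (hθ : 1 < θ) (n i : ℕ) :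
    0 ≤ (n.choose i : ℝ) * (1 - 1/θ) ^ i * (1/θ) ^ (n - i) := by
  have h1 : (0:ℝ) ≤ 1 - 1/θ := by
    have : 1/θ ≤ 1 := by
      rw [div_le_one (by linarith)]; linarith
    linarith
  have h2 : (0:ℝ) ≤ 1/θ := by positivity
  positivity

lemma bcdf_mono (θ : ℝ) (hθ : 1 < θ) (n : ℕ) {a b : ℕ} (h : a ≤ b) :
    bcdf θ n a ≤ bcdf θ n b := by
  apply sum_le_sum_of_subset_of_nonneg (range_subset_range.mpr (by omega))
  intro i _ _
  exact term_nonneg θ hθ n i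

lemma bcdf_pos (θ : ℝ) (hθ : 1 < θ) (n k : ℕ) : 0 < bcdf θ n k := by
  have h := bcdf_mono θ hθ n (Nat.zero_le k)
  rw [bcdf_zero] at h
  have : (0:ℝ) < (1/θ)^n := by positivity
  linarith

lemma tail_lt (θ : ℝ) (hθ : 1 < θ) (k : ℕ) :
    ∑ j ∈ range (k+1), (Real.log θ)^(j+1) / (Nat.factorial (j+1)) * Real.exp (-Real.log θ)
      < 1 - 1/θ := by
  set μ := Real.log θ with hμdef
  have hμ : 0 < μ := Real.log_pos hθ
  have hq : Real.exp (-μ) = 1/θ := by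
    rw [Real.exp_neg, Real.exp_log (by linarith)]; simp [one_div]
  have h1 : ∑ j ∈ range (k+1), μ^(j+1)/(Nat.factorial (j+1))
      = (∑ i ∈ range (k+2), μ^i/(Nat.factorial i)) - 1 := by
    rw [sum_range_succ' (fun i => μ^i/(Nat.factorial i)) (k+1)]
    simp
  have h2 : ∑ i ∈ range (k+2), μ^i/(Nat.factorial i) < Real.exp μ := by
    have h3 := Real.sum_le_exp_of_nonneg hμ.le (k+3)
    rw [sum_range_succ] at h3
    have h4 : 0 < μ^(k+2)/(Nat.factorial (k+2) : ℝ) := by positivity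
    calc ∑ i ∈ range (k+2), μ^i/(Nat.factorial i)
        < ∑ i ∈ range (k+2), μ^i/(Nat.factorial i) + μ^(k+2)/(Nat.factorial (k+2)) := by
          linarith
      _ ≤ Real.exp μ := h3
  rw [← sum_mul, h1]
  have hepos : (0:ℝ) < Real.exp (-μ) := Real.exp_pos _
  have : ((∑ i ∈ range (k+2), μ^i/(Nat.factorial i)) - 1) * Real.exp (-μ)
      < (Real.exp μ - 1) * Real.exp (-μ) := by
    apply mul_lt_mul_of_pos_right _ hepos
    linarith
  have hid : (Real.exp μ - 1) * Real.exp (-μ) = 1 - 1/θ := by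
    rw [sub_mul, ← Real.exp_add, hq]
    simp
  linarith [hid ▸ this]

lemma pi_nonneg (θ : ℝ) (hθ : 1 < θ) (j : ℕ) :
    0 ≤ (Real.log θ)^j / (Nat.factorial j) * Real.exp (-Real.log θ) := by
  have hμ : 0 < Real.log θ := Real.log_pos hθ
  positivity

lemma chain (θ : ℝ) (hθ : 1 < θ) (n : ℕ) (ih : ∀ m, pcdf θ n m ≤ bcdf θ n m) (k : ℕ) :
    pcdf θ (n+1) (k+1) < bcdf θ (n+1) (k+1) := by
  set μ := Real.log θ with hμdef
  have hq : Real.exp (-μ) = 1/θ := by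
    rw [Real.exp_neg, Real.exp_log (by linarith)]; simp [one_div]
  rw [pcdf_succ, bcdf_succ]
  have stepA : ∑ j ∈ range (k+1+1), μ^j/(Nat.factorial j) * Real.exp (-μ) * pcdf θ n (k+1-j)
      ≤ ∑ j ∈ range (k+1+1), μ^j/(Nat.factorial j) * Real.exp (-μ) * bcdf θ n (k+1-j) := by
    apply sum_le_sum
    intro j _
    exact mul_le_mul_of_nonneg_left (ih _) (pi_nonneg θ hθ j)
  have stepB : ∑ j ∈ range (k+1+1), μ^j/(Nat.factorial j) * Real.exp (-μ) * bcdf θ n (k+1-j)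
      = (∑ j ∈ range (k+1), μ^(j+1)/(Nat.factorial (j+1)) * Real.exp (-μ) * bcdf θ n (k-j))
        + Real.exp (-μ) * bcdf θ n (k+1) := by
    rw [sum_range_succ' (fun j => μ^j/(Nat.factorial j) * Real.exp (-μ) * bcdf θ n (k+1-j)) (k+1)]
    simp
  have stepC : ∑ j ∈ range (k+1), μ^(j+1)/(Nat.factorial (j+1)) * Real.exp (-μ) * bcdf θ n (k-j)
      ≤ (∑ j ∈ range (k+1), μ^(j+1)/(Nat.factorial (j+1)) * Real.exp (-μ)) * bcdf θ n k := by
    rw [sum_mul]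
    apply sum_le_sum
    intro j _
    exact mul_le_mul_of_nonneg_left (bcdf_mono θ hθ n (by omega)) (pi_nonneg θ hθ (j+1))
  have stepE : (∑ j ∈ range (k+1), μ^(j+1)/(Nat.factorial (j+1)) * Real.exp (-μ)) * bcdf θ n k
      < (1 - 1/θ) * bcdf θ n k :=
    mul_lt_mul_of_pos_right (tail_lt θ hθ k) (bcdf_pos θ hθ n k)
  calc ∑ j ∈ range (k+1+1), μ^j/(Nat.factorial j) * Real.exp (-μ) * pcdf θ n (k+1-j)
      ≤ ∑ j ∈ range (k+1+1), μ^j/(Nat.factorial j) * Real.exp (-μ) * bcdf θ n (k+1-j) := stepA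
    _ = (∑ j ∈ range (k+1), μ^(j+1)/(Nat.factorial (j+1)) * Real.exp (-μ) * bcdf θ n (k-j))
        + Real.exp (-μ) * bcdf θ n (k+1) := stepB
    _ ≤ (∑ j ∈ range (k+1), μ^(j+1)/(Nat.factorial (j+1)) * Real.exp (-μ)) * bcdf θ n k
        + Real.exp (-μ) * bcdf θ n (k+1) := by linarith
    _ < (1 - 1/θ) * bcdf θ n k + Real.exp (-μ) * bcdf θ n (k+1) := by linarith
    _ = (1/θ) * bcdf θ n (k+1) + (1 - 1/θ) * bcdf θ n k := by rw [hq]; ring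

lemma pcdf_le_bcdf (θ : ℝ) (hθ : 1 < θ) : ∀ n k, pcdf θ n k ≤ bcdf θ n k := by
  intro n
  induction n with
  | zero =>
    intro k
    have h1 : pcdf θ 0 k = 1 := by
      unfold pcdf
      rw [Finset.sum_eq_single 0]
      · simp
      · intro i _ hi
        simp [zero_pow hi]
      · simp
    have h2 : bcdf θ 0 k = 1 := by
      unfold bcdf
      rw [Finset.sum_eq_single 0]
      · simp
      · intro i _ hi
        simp [Nat.choose_eq_zero_of_lt (Nat.pos_of_ne_zero hi)]
      · simp
    rw [h1, h2]
  | succ n ih =>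
    intro k
    cases k with
    | zero => rw [pcdf_zero θ (by linarith), bcdf_zero]
    | succ k => exact (chain θ hθ n ih k).le

theorem binomial_cdf_gt_poisson_cdf (θ : ℝ) (hθ : 1 < θ) (N : ℕ) (hN : 1 ≤ N) :
    (∑ i ∈ range (0 + 1), (N.choose i : ℝ) * (1 - 1/θ) ^ i * (1/θ) ^ (N - i)) =
      (∑ i ∈ range (0 + 1),
        ((N : ℝ) * Real.log θ) ^ i / (Nat.factorial i) * Real.exp (-((N : ℝ) * Real.log θ))) ∧
    ∀ k : ℕ, 1 ≤ k → k ≤ N →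
      (∑ i ∈ range (k + 1), (N.choose i : ℝ) * (1 - 1/θ) ^ i * (1/θ) ^ (N - i)) >
      (∑ i ∈ range (k + 1),
        ((N : ℝ) * Real.log θ) ^ i / (Nat.factorial i) * Real.exp (-((N : ℝ) * Real.log θ))) := by
  constructor
  · show bcdf θ N 0 = pcdf θ N 0
    rw [bcdf_zero, pcdf_zero θ (by linarith)]
  · intro k hk _
    obtain ⟨k', rfl⟩ : ∃ k', k = k' + 1 := ⟨k - 1, by omega⟩
    obtain ⟨n, rfl⟩ : ∃ n, N = n + 1 := ⟨N - 1, by omega⟩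
    exact chain θ hθ n (fun m => pcdf_le_bcdf θ hθ n m) k'
end

section
/- Let A ⊇ B be measurable subsets of ℝ^d with finite positive Lebesgue measures V_A and V_B. Let X_1,...,X_m be i.i.d. uniform on A and Y_1,...,Y_n be i.i.d. uniform on B (with m ≤ n), all mutually independent. Define Z_1,...,Z_n by: let k(ω) be the number of indices i with X_i(ω) ∈ B, let i_1 < ... < i_{k(ω)} be those indices, and set Z_ℓ(ω) = X_{i_ℓ}(ω) for 1 ≤ ℓ ≤ k(ω) and Z_ℓ(ω) = Y_ℓ(ω) for k(ω) < ℓ ≤ n. Then Z_1,...,Z_n are i.i.d. uniform on B; i.e., for any measurable sets S_1,...,S_n ⊆ B, P(Z_ℓ ∈ S_ℓ for all ℓ) = Π_{ℓ=1}^{n} (vol(S_ℓ)/V_B). -/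
open MeasureTheory ProbabilityTheory

noncomputable def reuseZ {Ω : Type*} {E : Type*} {m n : ℕ}
    (X : Fin m → Ω → E) (Y : Fin n → Ω → E) (B : Set E) (ℓ : Fin n) (ω : Ω) : E := by
  classical
  exact
    let l := (Finset.univ.filter (fun i : Fin m => X i ω ∈ B)).sort (· ≤ ·)
    if h : (ℓ : ℕ) < l.length then X (l.get ⟨ℓ, h⟩) ω else Y ℓ ω

lemma reuseZ_spec {Ω E : Type*} {m n : ℕ} (X : Fin m → Ω → E) (Y : Fin n → Ω → E)
    (B : Set E) (ℓ : Fin n) (ω : Ω) (T : Finset (Fin m))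
    (hfil : ∀ i, X i ω ∈ B ↔ i ∈ T) :
    reuseZ X Y B ℓ ω =
      if h : (ℓ : ℕ) < (T.sort (· ≤ ·)).length
      then X ((T.sort (· ≤ ·)).get ⟨ℓ, h⟩) ω else Y ℓ ω := by
  classical
  have hT : (Finset.univ.filter (fun i : Fin m => X i ω ∈ B)) = T := by
    ext i; simp [hfil i]
  unfold reuseZ
  simp only [Finset.filter_congr_decidable]
  rw [hT]

/-- Theorem 2 (sample reuse): if `X_1, …, X_m` are i.i.d. uniform on `A`, `Y_1, …, Y_n`
are i.i.d. uniform on `B ⊆ A`, all mutually independent, `m ≤ n`, then the reused samples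
`Z_1, …, Z_n` are i.i.d. uniform on `B`: for measurable `S_ℓ ⊆ B`,
`P(Z_ℓ ∈ S_ℓ ∀ℓ) = Π_ℓ vol(S_ℓ)/vol(B)`. -/
theorem reuse_samples_iid_uniform {Ω : Type*} [MeasurableSpace Ω] (P : Measure Ω)
    [IsProbabilityMeasure P] (d m n : ℕ) (hmn : m ≤ n)
    (A B : Set (Fin d → ℝ)) (hBA : B ⊆ A) (hAmeas : MeasurableSet A)
    (hBmeas : MeasurableSet B) (hAfin : volume A < ⊤) (hBpos : 0 < volume B)
    (X : Fin m → Ω → (Fin d → ℝ)) (Y : Fin n → Ω → (Fin d → ℝ))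
    (hXunif : ∀ i, pdf.IsUniform (X i) A P volume)
    (hYunif : ∀ j, pdf.IsUniform (Y j) B P volume)
    (hXmeas : ∀ i, Measurable (X i)) (hYmeas : ∀ j, Measurable (Y j))
    (hindep : iIndepFun
      (Sum.elim X Y : Fin m ⊕ Fin n → Ω → (Fin d → ℝ)) P)
    (S : Fin n → Set (Fin d → ℝ)) (hSmeas : ∀ ℓ, MeasurableSet (S ℓ))
    (hSB : ∀ ℓ, S ℓ ⊆ B) :
    P {ω | ∀ ℓ : Fin n, reuseZ X Y B ℓ ω ∈ S ℓ} =
      ∏ ℓ : Fin n, volume (S ℓ) / volume B := by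
  classical
  have hB0 : volume B ≠ 0 := hBpos.ne'
  have hBA' : volume B ≤ volume A := measure_mono hBA
  have hAtop : volume A ≠ ⊤ := hAfin.ne
  have hBtop : volume B ≠ ⊤ := (lt_of_le_of_lt hBA' hAfin).ne
  have hA0 : volume A ≠ 0 := fun h => hB0 (le_antisymm (h ▸ hBA') (zero_le))
  have hcard : ∀ T : Finset (Fin m), T.card ≤ n := fun T =>
    le_trans (le_trans (Finset.card_le_univ T) (by simp)) hmn
  have hposlt : ∀ (T : Finset (Fin m)) (i : Fin m), i ∈ T →
      (T.sort (· ≤ ·)).idxOf i < n := by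
    intro T i hi
    have h1 : (T.sort (· ≤ ·)).idxOf i < (T.sort (· ≤ ·)).length :=
      List.idxOf_lt_length_iff.2 ((Finset.mem_sort _).2 hi)
    rw [Finset.length_sort] at h1
    exact lt_of_lt_of_le h1 (hcard T)
  set CT : Finset (Fin m) → Fin m → Set (Fin d → ℝ) := fun T i =>
    if h : i ∈ T then S ⟨(T.sort (· ≤ ·)).idxOf i, hposlt T i h⟩ else Bᶜ with hCT
  set DT : Finset (Fin m) → Fin n → Set (Fin d → ℝ) := fun T ℓ =>
    if T.card ≤ (ℓ : ℕ) then S ℓ else Set.univ with hDT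
  set G : Finset (Fin m) → Set Ω := fun T =>
    (⋂ i, X i ⁻¹' CT T i) ∩ ⋂ ℓ, Y ℓ ⁻¹' DT T ℓ with hG
  have hCTm : ∀ T i, MeasurableSet (CT T i) := by
    intro T i; rw [hCT]; dsimp only; split
    · exact hSmeas _
    · exact hBmeas.compl
  have hDTm : ∀ T ℓ, MeasurableSet (DT T ℓ) := by
    intro T ℓ; rw [hDT]; dsimp only; split
    · exact hSmeas _
    · exact MeasurableSet.univ
  -- membership characterization from G
  have hmemB : ∀ (T : Finset (Fin m)) (ω : Ω), ω ∈ G T → ∀ i, (X i ω ∈ B ↔ i ∈ T) := by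
    intro T ω hωG i
    have hC : X i ω ∈ CT T i := Set.mem_iInter.1 hωG.1 i
    rw [hCT] at hC; dsimp only at hC
    by_cases hi : i ∈ T
    · rw [dif_pos hi] at hC; exact ⟨fun _ => hi, fun _ => hSB _ hC⟩
    · rw [dif_neg hi] at hC; exact ⟨fun hB' => absurd hB' hC, fun h => absurd h hi⟩
  -- key set equality
  have key : ∀ T : Finset (Fin m),
      {ω | ∀ ℓ : Fin n, reuseZ X Y B ℓ ω ∈ S ℓ} ∩ {ω | ∀ i, (X i ω ∈ B ↔ i ∈ T)} = G T := by
    intro T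
    ext ω
    simp only [Set.mem_inter_iff, Set.mem_setOf_eq, hG, Set.mem_iInter, Set.mem_preimage]
    constructor
    · rintro ⟨hZ, hω⟩
      refine ⟨fun i => ?_, fun ℓ => ?_⟩
      · rw [hCT]; dsimp only
        by_cases hi : i ∈ T
        · rw [dif_pos hi]
          have hlt : (T.sort (· ≤ ·)).idxOf i < (T.sort (· ≤ ·)).length :=
            List.idxOf_lt_length_iff.2 ((Finset.mem_sort _).2 hi)
          have hZ' := hZ ⟨(T.sort (· ≤ ·)).idxOf i, hposlt T i hi⟩
          rw [reuseZ_spec X Y B _ ω T hω, dif_pos hlt] at hZ'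
          rwa [List.idxOf_get] at hZ'
        · rw [dif_neg hi]
          exact fun hB' => hi ((hω i).1 hB')
      · rw [hDT]; dsimp only
        by_cases hℓ : T.card ≤ (ℓ : ℕ)
        · rw [if_pos hℓ]
          have hZ' := hZ ℓ
          rw [reuseZ_spec X Y B ℓ ω T hω, dif_neg (by rw [Finset.length_sort]; omega)] at hZ'
          exact hZ'
        · rw [if_neg hℓ]; trivial
    · rintro ⟨hC, hD⟩
      have hω : ∀ i, X i ω ∈ B ↔ i ∈ T := fun i => hmemB T ω
        ⟨Set.mem_iInter.2 hC, Set.mem_iInter.2 hD⟩ i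
      refine ⟨fun ℓ => ?_, hω⟩
      rw [reuseZ_spec X Y B ℓ ω T hω]
      by_cases h : (ℓ : ℕ) < (T.sort (· ≤ ·)).length
      · rw [dif_pos h]
        set i := (T.sort (· ≤ ·)).get ⟨ℓ, h⟩ with hidef
        have hi : i ∈ T := (Finset.mem_sort _).1 (List.get_mem _ _)
        have hCi := hC i
        rw [hCT] at hCi; dsimp only at hCi
        rw [dif_pos hi] at hCi
        have hidx : (⟨(T.sort (· ≤ ·)).idxOf i, hposlt T i hi⟩ : Fin n) = ℓ := by
          apply Fin.ext
          simp only
          rw [hidef, List.get_idxOf (Finset.sort_nodup _ _)]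
        rwa [hidx] at hCi
      · rw [dif_neg h]
        have hℓ : T.card ≤ (ℓ : ℕ) := by
          rw [Finset.length_sort] at h; omega
        have hDℓ := hD ℓ
        rw [hDT] at hDℓ; dsimp only at hDℓ
        rwa [if_pos hℓ] at hDℓ
  -- cover and disjointness
  have hcover : {ω | ∀ ℓ : Fin n, reuseZ X Y B ℓ ω ∈ S ℓ} = ⋃ T : Finset (Fin m), G T := by
    ext ω
    simp only [Set.mem_iUnion]
    constructor
    · intro hω
      refine ⟨Finset.univ.filter (fun i => X i ω ∈ B), ?_⟩
      rw [← key]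
      exact ⟨hω, fun i => by simp⟩
    · rintro ⟨T, hT⟩
      rw [← key T] at hT
      exact hT.1
  have hdisj : Pairwise (Function.onFun Disjoint G) := by
    intro T T' hTT'
    rw [Function.onFun, Set.disjoint_left]
    intro ω h1 h2
    exact hTT' (Finset.ext fun i => ((hmemB T ω h1 i).symm.trans (hmemB T' ω h2 i)))
  have hGm : ∀ T, MeasurableSet (G T) :=
    fun T => (MeasurableSet.iInter fun i => (hXmeas i) (hCTm T i)).inter
      (MeasurableSet.iInter fun ℓ => (hYmeas ℓ) (hDTm T ℓ))
  -- per-T probability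
  have hPG : ∀ T : Finset (Fin m), P (G T) =
      (∏ ℓ : Fin n, volume (S ℓ) / volume B) *
        ((volume B / volume A) ^ T.card * (volume (A \ B) / volume A) ^ (m - T.card)) := by
    intro T
    have hGsum : G T = ⋂ j : Fin m ⊕ Fin n, Sum.elim X Y j ⁻¹' Sum.elim (CT T) (DT T) j := by
      rw [hG]; dsimp only
      rw [Set.iInter_sum]
      simp only [Sum.elim_inl, Sum.elim_inr]
    have hmeas' : ∀ j : Fin m ⊕ Fin n,
        MeasurableSet[(inferInstance : MeasurableSpace (Fin d → ℝ)).comap (Sum.elim X Y j)]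
          (Sum.elim X Y j ⁻¹' Sum.elim (CT T) (DT T) j) := by
      intro j
      refine ⟨Sum.elim (CT T) (DT T) j, ?_, rfl⟩
      cases j with
      | inl i => exact hCTm T i
      | inr ℓ => exact hDTm T ℓ
    rw [hGsum, hindep.meas_iInter hmeas', Fintype.prod_sum_type]
    simp only [Sum.elim_inl, Sum.elim_inr]
    have hXval : ∀ i : Fin m, P (X i ⁻¹' CT T i) = volume (A ∩ CT T i) / volume A :=
      fun i => (hXunif i).measure_preimage hA0 hAtop (hCTm T i)
    have hYval : ∀ ℓ : Fin n, P (Y ℓ ⁻¹' DT T ℓ) = volume (B ∩ DT T ℓ) / volume B :=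
      fun ℓ => (hYunif ℓ).measure_preimage hB0 hBtop (hDTm T ℓ)
    have harith : ∀ a : ENNReal, a / volume A = volume B / volume A * (a / volume B) := by
      intro a
      calc a / volume A = (volume B * (volume B)⁻¹) * (a * (volume A)⁻¹) := by
            rw [ENNReal.mul_inv_cancel hB0 hBtop, one_mul, div_eq_mul_inv]
        _ = volume B / volume A * (a / volume B) := by simp only [div_eq_mul_inv]; ring
    have hXprod : (∏ i : Fin m, P (X i ⁻¹' CT T i)) =
        (volume B / volume A) ^ T.card *
          (∏ ℓ ∈ Finset.univ.filter (fun ℓ : Fin n => (ℓ : ℕ) < T.card),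
            volume (S ℓ) / volume B) *
          (volume (A \ B) / volume A) ^ (m - T.card) := by
      rw [← Finset.prod_mul_prod_compl T]
      congr 1
      · have step1 : ∏ i ∈ T, P (X i ⁻¹' CT T i) =
            ∏ i ∈ T, (volume B / volume A) * (volume (CT T i) / volume B) := by
          refine Finset.prod_congr rfl fun i hi => ?_
          have hsub : A ∩ CT T i = CT T i := Set.inter_eq_self_of_subset_right (by
            rw [hCT]; dsimp only; rw [dif_pos hi]; exact (hSB _).trans hBA)
          rw [hXval i, hsub, harith]
        rw [step1, Finset.prod_mul_distrib, Finset.prod_const]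
        congr 1
        refine Finset.prod_bij
          (fun i hi => (⟨(T.sort (· ≤ ·)).idxOf i, hposlt T i hi⟩ : Fin n)) ?_ ?_ ?_ ?_
        · intro i hi
          simp only [Finset.mem_filter, Finset.mem_univ, true_and]
          have h1 : (T.sort (· ≤ ·)).idxOf i < (T.sort (· ≤ ·)).length :=
            List.idxOf_lt_length_iff.2 ((Finset.mem_sort _).2 hi)
          rwa [Finset.length_sort] at h1
        · intro i₁ h₁ i₂ h₂ heq
          have hv : (T.sort (· ≤ ·)).idxOf i₁ = (T.sort (· ≤ ·)).idxOf i₂ :=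
            congrArg Fin.val heq
          exact (List.idxOf_inj ((Finset.mem_sort _).2 h₁)).1 hv
        · intro ℓ hℓ
          simp only [Finset.mem_filter, Finset.mem_univ, true_and] at hℓ
          have hlen : (ℓ : ℕ) < (T.sort (· ≤ ·)).length := by
            rw [Finset.length_sort]; exact hℓ
          refine ⟨(T.sort (· ≤ ·)).get ⟨ℓ, hlen⟩,
            (Finset.mem_sort _).1 (List.get_mem _ _), ?_⟩
          exact Fin.ext (List.get_idxOf (Finset.sort_nodup _ _) _)
        · intro i hi
          rw [hCT]; dsimp only; rw [dif_pos hi]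
      · have : ∀ i ∈ Tᶜ, P (X i ⁻¹' CT T i) = volume (A \ B) / volume A := by
          intro i hi
          have hni : i ∉ T := Finset.mem_compl.1 hi
          rw [hXval i, hCT]; dsimp only
          rw [dif_neg hni, ← Set.diff_eq]
        rw [Finset.prod_congr rfl this, Finset.prod_const, Finset.card_compl,
          Fintype.card_fin]
    have hYprod : (∏ ℓ : Fin n, P (Y ℓ ⁻¹' DT T ℓ)) =
        ∏ ℓ ∈ Finset.univ.filter (fun ℓ : Fin n => ¬ (ℓ : ℕ) < T.card),
          volume (S ℓ) / volume B := by
      rw [← Finset.prod_filter_mul_prod_filter_not Finset.univ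
        (fun ℓ : Fin n => (ℓ : ℕ) < T.card)]
      have h1 : ∏ ℓ ∈ Finset.univ.filter (fun ℓ : Fin n => (ℓ : ℕ) < T.card),
          P (Y ℓ ⁻¹' DT T ℓ) = 1 := by
        refine Finset.prod_eq_one fun ℓ hℓ => ?_
        simp only [Finset.mem_filter, Finset.mem_univ, true_and] at hℓ
        rw [hYval ℓ, hDT]; dsimp only
        rw [if_neg (by omega), Set.inter_univ, ENNReal.div_self hB0 hBtop]
      rw [h1, one_mul]
      refine Finset.prod_congr rfl fun ℓ hℓ => ?_
      simp only [Finset.mem_filter, Finset.mem_univ, true_and] at hℓ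
      rw [hYval ℓ, hDT]; dsimp only
      rw [if_pos (not_lt.1 hℓ), Set.inter_eq_self_of_subset_right (hSB ℓ)]
    rw [hXprod, hYprod,
      ← Finset.prod_filter_mul_prod_filter_not Finset.univ
        (fun ℓ : Fin n => (ℓ : ℕ) < T.card) (fun ℓ => volume (S ℓ) / volume B)]
    ring
  rw [hcover, measure_iUnion hdisj hGm, tsum_fintype]
  simp_rw [hPG]
  rw [← Finset.mul_sum]
  have hone : volume B / volume A + volume (A \ B) / volume A = 1 := by
    rw [ENNReal.div_add_div_same, measure_add_diff hBmeas.nullMeasurableSet A,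
      Set.union_eq_self_of_subset_left hBA, ENNReal.div_self hA0 hAtop]
  have hsum : ∑ T : Finset (Fin m),
      (volume B / volume A) ^ T.card * (volume (A \ B) / volume A) ^ (m - T.card) = 1 := by
    have hpa := Finset.prod_add (fun _ : Fin m => volume B / volume A)
      (fun _ : Fin m => volume (A \ B) / volume A) Finset.univ
    rw [Finset.prod_const, hone, one_pow, Finset.powerset_univ] at hpa
    rw [show (∑ T : Finset (Fin m),
        (volume B / volume A) ^ T.card * (volume (A \ B) / volume A) ^ (m - T.card)) =
        ∑ T : Finset (Fin m), (∏ _i ∈ T, volume B / volume A) *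
          ∏ _i ∈ Finset.univ \ T, volume (A \ B) / volume A from
      Finset.sum_congr rfl fun T _ => by
        rw [Finset.prod_const, Finset.prod_const, Finset.card_sdiff_of_subset (Finset.subset_univ T),
          Finset.card_univ, Fintype.card_fin]]
    exact hpa.symm
  rw [hsum, mul_one]
end

section
/- Let g(s) = Σ_{ℓ=2}^{m} ln(p_ℓ s + 1 − p_ℓ) with p_ℓ = 1 − v_ℓ/v_{ℓ−1}, v_1 > ... > v_m > 0, for s ∈ (0,1], and let I_2(s) = (s−1)·Σ_{ℓ=2}^m (v_{ℓ−1} − v_ℓ)/v_ℓ. Then |g(s) − I_2(s)| ≤ (s² + 1)(v_1 − v_m)ν / (2 v_m²), where ν = max_ℓ(v_{ℓ−1} − v_ℓ). -/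
open Finset

/-- Quadratic lower bound for `log (1+u)` when `u ≥ 0`. -/
lemma log_one_add_ge_quad (u : ℝ) (hu : 0 ≤ u) : u - u ^ 2 / 2 ≤ Real.log (1 + u) := by
  set f : ℝ → ℝ := fun x => Real.log (1 + x) - x + x ^ 2 / 2 with hf
  have key : ∀ x : ℝ, 0 ≤ x → 0 ≤ f x := by
    have hderiv : ∀ x ∈ interior (Set.Ici (0 : ℝ)),
        0 ≤ deriv f x := by
      intro x hx
      rw [interior_Ici] at hx
      have hx0 : (0 : ℝ) < x := hx
      have h1 : HasDerivAt (fun y : ℝ => Real.log (1 + y)) (1 / (1 + x)) x := by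
        have := (Real.hasDerivAt_log (show (1 : ℝ) + x ≠ 0 by positivity)).comp x
          ((hasDerivAt_id x).const_add 1)
        simpa [Function.comp_def] using this
      have h2 : HasDerivAt f (1 / (1 + x) - 1 + x) x := by
        have := (h1.sub (hasDerivAt_id x)).add
          (((hasDerivAt_id x).pow 2).div_const 2)
        simpa [hf, Pi.add_def, Pi.sub_def] using this
      rw [h2.deriv]
      have h1x : (0 : ℝ) < 1 + x := by linarith
      have hrw : 1 / (1 + x) - 1 + x = x ^ 2 / (1 + x) := by field_simp; ring
      rw [hrw]
      positivity
    have hcont : ContinuousOn f (Set.Ici 0) := by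
      apply ContinuousOn.add
      apply ContinuousOn.sub
      · apply ContinuousOn.log (by fun_prop)
        intro x hx
        have : (0:ℝ) ≤ x := hx
        positivity
      · fun_prop
      · fun_prop
    have hdiff : DifferentiableOn ℝ f (interior (Set.Ici (0:ℝ))) := by
      rw [interior_Ici]
      intro x hx
      have hx0 : (0 : ℝ) < x := hx
      have h1 : HasDerivAt (fun y : ℝ => Real.log (1 + y)) (1 / (1 + x)) x := by
        have := (Real.hasDerivAt_log (show (1 : ℝ) + x ≠ 0 by positivity)).comp x
          ((hasDerivAt_id x).const_add 1)
        simpa [Function.comp_def] using this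
      have h2 : HasDerivAt f (1 / (1 + x) - 1 + x) x := by
        have := (h1.sub (hasDerivAt_id x)).add
          (((hasDerivAt_id x).pow 2).div_const 2)
        simpa [hf, Pi.add_def, Pi.sub_def] using this
      exact h2.differentiableAt.differentiableWithinAt
    have hmono : MonotoneOn f (Set.Ici 0) :=
      monotoneOn_of_deriv_nonneg (convex_Ici 0) hcont hdiff hderiv
    intro x hx
    have h0 : f 0 = 0 := by simp [hf]
    have := hmono (Set.self_mem_Ici) (Set.mem_Ici.mpr hx) hx
    linarith [this]
  have := key u hu
  simp only [hf] at this
  linarith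

/-- Upper bound `log (1+u) ≤ u` for `u ≥ 0`. -/
lemma log_one_add_le (u : ℝ) (hu : 0 ≤ u) : Real.log (1 + u) ≤ u := by
  have := Real.log_le_sub_one_of_pos (show (0:ℝ) < 1 + u by linarith)
  linarith

/-- Per-term bound. -/
lemma term_bound (b d s : ℝ) (hb : 0 < b) (hd : 0 ≤ d) (hs : 0 ≤ s) (hs1 : s ≤ 1) :
    |Real.log (1 + d * s / b) - Real.log (1 + d / b) - (s - 1) * (d / b)| ≤
      (s ^ 2 + 1) * d ^ 2 / (2 * b ^ 2) := by
  have hds : 0 ≤ d * s / b := by positivity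
  have hdb : 0 ≤ d / b := by positivity
  have hA1 := log_one_add_ge_quad _ hds
  have hA2 := log_one_add_ge_quad _ hdb
  have hB1 := log_one_add_le _ hds
  have hB2 := log_one_add_le _ hdb
  have hsq1 : (d * s / b) ^ 2 = s ^ 2 * d ^ 2 / b ^ 2 := by ring
  have hsq2 : (d / b) ^ 2 = d ^ 2 / b ^ 2 := by ring
  have hb2 : (0:ℝ) < b ^ 2 := by positivity
  have hY : (0:ℝ) ≤ d ^ 2 / b ^ 2 := by positivity
  have hX : (0:ℝ) ≤ s ^ 2 * d ^ 2 / b ^ 2 := by positivity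
  have hgoal : (s ^ 2 + 1) * d ^ 2 / (2 * b ^ 2)
      = (s ^ 2 * d ^ 2 / b ^ 2 + d ^ 2 / b ^ 2) / 2 := by
    field_simp
  rw [abs_le, hgoal]
  have hrw : (s - 1) * (d / b) = d * s / b - d / b := by ring
  rw [hrw]
  rw [hsq1] at hA1
  rw [hsq2] at hA2
  constructor
  · linarith
  · linarith

/-- With `p_ℓ = 1 − v_ℓ/v_{ℓ−1}`, `g(s) = Σ_{ℓ=2}^m ln(p_ℓ s + 1 − p_ℓ)` and
`I₂(s) = (s−1)·Σ_{ℓ=2}^m (v_{ℓ−1} − v_ℓ)/v_ℓ`, one has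
`|g(s) − I₂(s)| ≤ (s² + 1)(v_1 − v_m)ν / (2 v_m²)`, where `ν` bounds the mesh. -/
theorem log_pgf_close_to_linear (m : ℕ) (hm : 2 ≤ m) (v : ℕ → ℝ)
    (hpos : ∀ ℓ, 1 ≤ ℓ → ℓ ≤ m → 0 < v ℓ)
    (hdec : ∀ ℓ, 2 ≤ ℓ → ℓ ≤ m → v ℓ < v (ℓ - 1))
    (ν : ℝ) (hν : ∀ ℓ, 2 ≤ ℓ → ℓ ≤ m → v (ℓ - 1) - v ℓ ≤ ν)
    (s : ℝ) (hs : 0 < s) (hs1 : s ≤ 1) :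
    |(∑ ℓ ∈ Finset.Icc 2 m,
        Real.log ((1 - v ℓ / v (ℓ - 1)) * s + v ℓ / v (ℓ - 1))) -
      (s - 1) * ∑ ℓ ∈ Finset.Icc 2 m, (v (ℓ - 1) - v ℓ) / v ℓ| ≤
      (s ^ 2 + 1) * (v 1 - v m) * ν / (2 * (v m) ^ 2) := by
  -- monotonicity: v m ≤ v ℓ for 1 ≤ ℓ ≤ m
  have hmono : ∀ ℓ, 1 ≤ ℓ → ℓ ≤ m → v m ≤ v ℓ := by
    intro ℓ h1 h2
    have key : ∀ k, ℓ + k ≤ m → v (ℓ + k) ≤ v ℓ := by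
      intro k
      induction k with
      | zero => intro _; simp
      | succ n ih =>
        intro hle
        have h' : ℓ + n ≤ m := by omega
        have := hdec (ℓ + n + 1) (by omega) (by omega)
        have heq : ℓ + n + 1 - 1 = ℓ + n := by omega
        rw [heq] at this
        have := ih h'
        have : v (ℓ + (n+1)) ≤ v (ℓ + n) := by
          have h2 := hdec (ℓ + n + 1) (by omega) (by omega)
          rw [heq] at h2
          have : ℓ + (n + 1) = ℓ + n + 1 := by omega
          rw [this]; linarith
        linarith [ih h']
    have := key (m - ℓ) (by omega)
    rwa [show ℓ + (m - ℓ) = m by omega] at this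
  have hvm : 0 < v m := hpos m (by omega) le_rfl
  -- telescoping sum
  have htel : ∑ ℓ ∈ Finset.Icc 2 m, (v (ℓ - 1) - v ℓ) = v 1 - v m := by
    have h1 : Finset.Icc 2 m = Finset.Ico 2 (m + 1) := by
      rw [Finset.Ico_add_one_right_eq_Icc]
    rw [h1, Finset.sum_Ico_eq_sum_range]
    have h2 : ∀ i ∈ Finset.range (m + 1 - 2),
        v (2 + i - 1) - v (2 + i) = (fun j => -v (j + 1)) (i + 1) - (fun j => -v (j + 1)) i := by
      intro i _
      simp only
      have : 2 + i - 1 = i + 1 := by omega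
      rw [this, show 2 + i = i + 1 + 1 by omega]
      ring
    rw [Finset.sum_congr rfl h2, Finset.sum_range_sub (fun j => -v (j + 1))]
    rw [show m + 1 - 2 = m - 1 from by omega]
    show -v (m - 1 + 1) - -v (0 + 1) = v 1 - v m
    rw [show m - 1 + 1 = m from by omega]
    norm_num
    ring
  -- per-term rewriting and bound
  have hterm : ∀ ℓ ∈ Finset.Icc 2 m,
      |Real.log ((1 - v ℓ / v (ℓ - 1)) * s + v ℓ / v (ℓ - 1)) - (s - 1) * ((v (ℓ - 1) - v ℓ) / v ℓ)|
        ≤ (s ^ 2 + 1) * ν / (2 * (v m) ^ 2) * (v (ℓ - 1) - v ℓ) := by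
    intro ℓ hℓ
    rw [Finset.mem_Icc] at hℓ
    obtain ⟨h2ℓ, hℓm⟩ := hℓ
    set a := v (ℓ - 1) with ha
    set b := v ℓ with hb
    have hbpos : 0 < b := hpos ℓ (by omega) hℓm
    have hapos : 0 < a := hpos (ℓ - 1) (by omega) (by omega)
    have hba : b < a := hdec ℓ h2ℓ hℓm
    set d := a - b with hd
    have hdpos : 0 < d := sub_pos.mpr hba
    have hdν : d ≤ ν := hν ℓ h2ℓ hℓm
    have hbm : v m ≤ b := hmono ℓ (by omega) hℓm
    -- rewrite the log argument
    have harg : (1 - b / a) * s + b / a = (1 + d * s / b) * (b / a) := by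
      field_simp [hd]
      ring
    have hlog : Real.log ((1 - b / a) * s + b / a)
        = Real.log (1 + d * s / b) - Real.log (1 + d / b) := by
      rw [harg, Real.log_mul (by positivity) (by positivity)]
      have : b / a = (1 + d / b)⁻¹ := by
        field_simp [hd]
        ring
      rw [this, Real.log_inv]
      ring
    have hratio : (a - b) / b = d / b := by rw [hd]
    rw [hlog, hratio]
    calc |Real.log (1 + d * s / b) - Real.log (1 + d / b) - (s - 1) * (d / b)|
        ≤ (s ^ 2 + 1) * d ^ 2 / (2 * b ^ 2) :=
          term_bound b d s hbpos hdpos.le hs.le hs1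
      _ ≤ (s ^ 2 + 1) * ν / (2 * (v m) ^ 2) * d := by
          rw [div_le_iff₀ (by positivity)]
          have h1 : d ^ 2 ≤ ν * d := by nlinarith
          have h2 : (v m) ^ 2 ≤ b ^ 2 := by nlinarith
          have hsp : (0:ℝ) < s ^ 2 + 1 := by positivity
          have hν0 : 0 < ν := lt_of_lt_of_le hdpos hdν
          calc (s ^ 2 + 1) * d ^ 2 ≤ (s ^ 2 + 1) * (ν * d) := by nlinarith
            _ = (s ^ 2 + 1) * ν * d := by ring
            _ ≤ (s ^ 2 + 1) * ν / (2 * (v m) ^ 2) * d * (2 * b ^ 2) := by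
                rw [div_mul_eq_mul_div, div_mul_eq_mul_div, le_div_iff₀ (by positivity)]
                have : (0:ℝ) ≤ (s ^ 2 + 1) * ν * d := by positivity
                nlinarith
  -- combine
  rw [Finset.mul_sum, ← Finset.sum_sub_distrib]
  calc |∑ ℓ ∈ Finset.Icc 2 m,
        (Real.log ((1 - v ℓ / v (ℓ - 1)) * s + v ℓ / v (ℓ - 1)) - (s - 1) * ((v (ℓ - 1) - v ℓ) / v ℓ))|
      ≤ ∑ ℓ ∈ Finset.Icc 2 m,
        |Real.log ((1 - v ℓ / v (ℓ - 1)) * s + v ℓ / v (ℓ - 1)) - (s - 1) * ((v (ℓ - 1) - v ℓ) / v ℓ)| :=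
        Finset.abs_sum_le_sum_abs _ _
    _ ≤ ∑ ℓ ∈ Finset.Icc 2 m, (s ^ 2 + 1) * ν / (2 * (v m) ^ 2) * (v (ℓ - 1) - v ℓ) :=
        Finset.sum_le_sum hterm
    _ = (s ^ 2 + 1) * ν / (2 * (v m) ^ 2) * (v 1 - v m) := by
        rw [← Finset.mul_sum, htel]
    _ = (s ^ 2 + 1) * (v 1 - v m) * ν / (2 * (v m) ^ 2) := by ring
end

section
/- Let U ~ N − Binomial(N, v_2/v_1) where v_1 > v_2 > 0 (so U counts failures in N Bernoulli(v_2/v_1) trials), and let V ~ Poisson(N ln(v_1/v_2)). Then the CDF of U · strictly dominates: P(U = 0) = P(V = 0) and P(U ≤ k) > P(V ≤ k) for every integer k ≥ 1. -/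
open Real Filter Finset Topology

private lemma exp_chord {a b : ℝ} (ha : 0 < a) (hab : a < b) :
    Real.exp a - 1 < a / b * (Real.exp b - 1) := by
  have hb : 0 < b := ha.trans hab
  have hlt : a / b < 1 := (div_lt_one hb).2 hab
  have h := strictConvexOn_exp.2 (Set.mem_univ (0:ℝ)) (Set.mem_univ b)
    (by linarith : (0:ℝ) ≠ b) (by linarith : (0:ℝ) < 1 - a / b)
    (by positivity : (0:ℝ) < a / b) (by ring)
  simp only [smul_eq_mul, mul_zero, zero_add, Real.exp_zero] at h
  rw [div_mul_cancel₀ a hb.ne'] at h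
  nlinarith [h]

private noncomputable def binCDF (N k : ℕ) (t : ℝ) : ℝ :=
  ∑ i ∈ Finset.range (k+1),
    (N.choose i : ℝ) * (1 - Real.exp (-t)) ^ i * Real.exp (-t) ^ (N - i)

private noncomputable def poiCDF (N k : ℕ) (t : ℝ) : ℝ :=
  ∑ i ∈ Finset.range (k+1),
    ((N:ℝ) * t) ^ i / (Nat.factorial i) * Real.exp (-((N:ℝ) * t))

private noncomputable def cSeq (N : ℕ) (t : ℝ) : ℕ → ℝ
  | 0 => 0
  | (j+1) => (((N-1).choose j : ℕ) : ℝ) * (1 - Real.exp (-t)) ^ j * Real.exp (-t) ^ (N - j)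

private noncomputable def dSeq (N : ℕ) (t : ℝ) : ℕ → ℝ
  | 0 => 0
  | (j+1) => ((N:ℝ) * t) ^ j / (Nat.factorial j)

private lemma hasDerivAt_binCDF (N k : ℕ) (hk : k < N) (t : ℝ) :
    HasDerivAt (binCDF N k)
      (-((N:ℝ) * (((N-1).choose k : ℝ) * (1 - Real.exp (-t)) ^ k * Real.exp (-t) ^ (N - k)))) t := by
  have hq : HasDerivAt (fun x : ℝ => Real.exp (-x)) (Real.exp (-t) * -1) t :=
    ((hasDerivAt_id t).neg.exp)
  have hterm : ∀ i ∈ Finset.range (k+1),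
      HasDerivAt (fun x : ℝ => (N.choose i : ℝ) * (1 - Real.exp (-x)) ^ i * Real.exp (-x) ^ (N - i))
        ((N:ℝ) * (cSeq N t i - cSeq N t (i+1))) t := by
    intro i hi
    have hiN : i < N := lt_of_le_of_lt (Nat.lt_succ_iff.1 (Finset.mem_range.1 hi)) hk
    have hp : HasDerivAt (fun x : ℝ => 1 - Real.exp (-x)) (-(Real.exp (-t) * -1)) t :=
      hq.const_sub 1
    have h1 := ((hp.fun_pow i).const_mul (N.choose i : ℝ)).fun_mul (hq.fun_pow (N - i))
    refine h1.congr_deriv (Eq.symm ?_)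
    rcases i with _ | j
    · simp only [cSeq, Nat.choose_zero_right, Nat.cast_one, pow_zero, Nat.sub_zero,
        Nat.cast_zero, Nat.cast_ofNat]
      have hpow : Real.exp (-t) ^ (N - 1) * Real.exp (-t) = Real.exp (-t) ^ N := by
        rw [← pow_succ]; congr 1; omega
      push_cast
      nlinarith [hpow]
    · have hj1 : j + 1 < N := hiN
      obtain ⟨m, hm⟩ : ∃ m, N - (j+1) = m + 1 := ⟨N - (j+1) - 1, by omega⟩
      have hNj : N - j = m + 2 := by omega
      have c1 : (N:ℝ) * ((N-1).choose j : ℝ) = (N.choose (j+1) : ℝ) * (j+1) := by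
        have := Nat.add_one_mul_choose_eq (N-1) j
        rw [Nat.sub_add_cancel (by omega : 1 ≤ N)] at this
        exact_mod_cast congrArg (Nat.cast (R := ℝ)) this
      have c2 : (N:ℝ) * ((N-1).choose (j+1) : ℝ) = (N.choose (j+1) : ℝ) * (m+1) := by
        have h4 := Nat.add_one_mul_choose_eq (N-1) (j+1)
        rw [Nat.sub_add_cancel (by omega : 1 ≤ N)] at h4
        have h3 := Nat.choose_succ_right_eq N (j+1)
        rw [hm] at h3
        have h5 : N * (N-1).choose (j+1) = N.choose (j+1) * (m+1) := by rw [h4, h3]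
        exact_mod_cast congrArg (Nat.cast (R := ℝ)) h5
      simp only [cSeq, hNj, hm, Nat.add_sub_cancel]
      push_cast
      linear_combination (Real.exp (-t))^(m+2) * (1 - Real.exp (-t))^j * c1
        - (Real.exp (-t))^(m+1) * (1 - Real.exp (-t))^(j+1) * c2
  have hsum := HasDerivAt.fun_sum hterm
  have hval : ∑ i ∈ Finset.range (k+1), (N:ℝ) * (cSeq N t i - cSeq N t (i+1))
      = -((N:ℝ) * (((N-1).choose k : ℝ) * (1 - Real.exp (-t)) ^ k * Real.exp (-t) ^ (N - k))) := by
    rw [← Finset.mul_sum, Finset.sum_range_sub' (cSeq N t) (k+1)]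
    simp only [cSeq]
    ring
  rw [hval] at hsum
  exact hsum

private lemma hasDerivAt_poiCDF (N k : ℕ) (t : ℝ) :
    HasDerivAt (poiCDF N k)
      (-((N:ℝ) * (((N:ℝ) * t) ^ k / (Nat.factorial k)) * Real.exp (-((N:ℝ) * t)))) t := by
  have hl : HasDerivAt (fun x : ℝ => (N:ℝ) * x) (N:ℝ) t := by
    simpa using (hasDerivAt_id t).const_mul (N:ℝ)
  have he : HasDerivAt (fun x : ℝ => Real.exp (-((N:ℝ) * x)))
      (Real.exp (-((N:ℝ) * t)) * -(N:ℝ)) t := hl.neg.exp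
  have hterm : ∀ i ∈ Finset.range (k+1),
      HasDerivAt (fun x : ℝ => ((N:ℝ) * x) ^ i / (Nat.factorial i) * Real.exp (-((N:ℝ) * x)))
        ((N:ℝ) * Real.exp (-((N:ℝ) * t)) * (dSeq N t i - dSeq N t (i+1))) t := by
    intro i _
    have h1 := ((hl.fun_pow i).div_const (Nat.factorial i : ℝ)).fun_mul he
    refine h1.congr_deriv (Eq.symm ?_)
    rcases i with _ | j
    · simp [dSeq, mul_comm]
    · have hf : (Nat.factorial (j+1) : ℝ) = (j+1) * (Nat.factorial j) := by
        push_cast [Nat.factorial_succ]; ring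
      have hfj : (Nat.factorial j : ℝ) ≠ 0 := by positivity
      simp only [dSeq, Nat.add_sub_cancel]
      rw [hf]
      field_simp
      push_cast
      ring
  have hsum := HasDerivAt.fun_sum hterm
  have hval : ∑ i ∈ Finset.range (k+1),
      (N:ℝ) * Real.exp (-((N:ℝ) * t)) * (dSeq N t i - dSeq N t (i+1))
      = -((N:ℝ) * (((N:ℝ) * t) ^ k / (Nat.factorial k)) * Real.exp (-((N:ℝ) * t))) := by
    rw [← Finset.mul_sum, Finset.sum_range_sub' (dSeq N t) (k+1)]
    simp only [dSeq]
    ring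
  rw [hval] at hsum
  exact hsum

private lemma binCDF_zero (N k : ℕ) : binCDF N k 0 = 1 := by
  unfold binCDF
  rw [Finset.sum_eq_single 0]
  · simp
  · intro i _ hi
    simp [zero_pow hi]
  · simp

private lemma poiCDF_zero (N k : ℕ) : poiCDF N k 0 = 1 := by
  unfold poiCDF
  rw [Finset.sum_eq_single 0]
  · simp
  · intro i _ hi
    simp [zero_pow hi]
  · simp

private lemma tendsto_binCDF (N k : ℕ) (hk : k < N) : Tendsto (binCDF N k) atTop (𝓝 0) := by
  have h0 : Tendsto (fun t : ℝ => Real.exp (-t)) atTop (𝓝 0) :=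
    Real.tendsto_exp_neg_atTop_nhds_zero
  have : Tendsto (fun t => ∑ i ∈ Finset.range (k+1),
      (N.choose i : ℝ) * (1 - Real.exp (-t)) ^ i * Real.exp (-t) ^ (N - i)) atTop
      (𝓝 (∑ i ∈ Finset.range (k+1), (0:ℝ))) := by
    apply tendsto_finset_sum
    intro i hi
    have hiN : i < N := lt_of_le_of_lt (Nat.lt_succ_iff.1 (Finset.mem_range.1 hi)) hk
    have h1 : Tendsto (fun t : ℝ => (1 - Real.exp (-t)) ^ i) atTop (𝓝 1) := by
      have := (tendsto_const_nhds (x := (1:ℝ)).sub h0).pow i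
      simpa using this
    have h2 : Tendsto (fun t : ℝ => Real.exp (-t) ^ (N - i)) atTop (𝓝 0) := by
      have := h0.pow (N - i)
      simpa [zero_pow (by omega : N - i ≠ 0)] using this
    have := ((tendsto_const_nhds (x := (N.choose i : ℝ))).mul h1).mul h2
    simpa using this
  unfold binCDF; simpa using this

private lemma tendsto_poiCDF (N k : ℕ) (hN : 1 ≤ N) : Tendsto (poiCDF N k) atTop (𝓝 0) := by
  have hNt : Tendsto (fun t : ℝ => (N:ℝ) * t) atTop atTop :=
    Tendsto.const_mul_atTop (by exact_mod_cast Nat.pos_of_ne_zero (by omega)) tendsto_id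
  have : Tendsto (fun t => ∑ i ∈ Finset.range (k+1),
      ((N:ℝ) * t) ^ i / (Nat.factorial i) * Real.exp (-((N:ℝ) * t))) atTop
      (𝓝 (∑ i ∈ Finset.range (k+1), (0:ℝ))) := by
    apply tendsto_finset_sum
    intro i _
    have h1 : Tendsto (fun t : ℝ => ((N:ℝ)*t) ^ i * Real.exp (-((N:ℝ)*t))) atTop (𝓝 0) :=
      (Real.tendsto_pow_mul_exp_neg_atTop_nhds_zero i).comp hNt
    have := h1.div_const (Nat.factorial i : ℝ)
    simp only [zero_div] at this
    apply this.congr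
    intro t; ring
  unfold poiCDF; simpa using this

private lemma binCDF_eq_one (N k : ℕ) (hk : N ≤ k) (t : ℝ) : binCDF N k t = 1 := by
  unfold binCDF
  rw [← Finset.sum_subset (Finset.range_subset_range.2 (by omega : N + 1 ≤ k + 1))]
  · have := add_pow (1 - Real.exp (-t)) (Real.exp (-t)) N
    simp only [sub_add_cancel, one_pow] at this
    calc ∑ i ∈ Finset.range (N+1), (N.choose i : ℝ) * (1 - Real.exp (-t)) ^ i * Real.exp (-t) ^ (N - i)
        = ∑ i ∈ Finset.range (N+1), (1 - Real.exp (-t)) ^ i * Real.exp (-t) ^ (N - i) * (N.choose i : ℝ) := by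
          apply Finset.sum_congr rfl; intro i _; ring
      _ = 1 := this.symm
  · intro i _ hi
    have : N < i := by simp at hi ⊢; omega
    simp [Nat.choose_eq_zero_of_lt this]

private lemma poiCDF_lt_one (N k : ℕ) (hN : 1 ≤ N) (t : ℝ) (ht : 0 < t) : poiCDF N k t < 1 := by
  set l : ℝ := (N:ℝ) * t with hl
  have hNpos : (0:ℝ) < N := by exact_mod_cast Nat.pos_of_ne_zero (by omega)
  have hl0 : 0 < l := by positivity
  have h1 : ∑ i ∈ Finset.range (k+2), l ^ i / (Nat.factorial i) ≤ Real.exp l :=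
    Real.sum_le_exp_of_nonneg hl0.le (k+2)
  have h2 : ∑ i ∈ Finset.range (k+1), l ^ i / (Nat.factorial i)
      < ∑ i ∈ Finset.range (k+2), l ^ i / (Nat.factorial i) := by
    rw [Finset.sum_range_succ (n := k+1)]
    have : 0 < l ^ (k+1) / (Nat.factorial (k+1)) := by positivity
    linarith
  have h3 : poiCDF N k t
      = (∑ i ∈ Finset.range (k+1), l ^ i / (Nat.factorial i)) * Real.exp (-l) := by
    unfold poiCDF
    rw [Finset.sum_mul]
  rw [h3]
  have he : 0 < Real.exp (-l) := Real.exp_pos _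
  calc (∑ i ∈ Finset.range (k+1), l ^ i / (Nat.factorial i)) * Real.exp (-l)
      < Real.exp l * Real.exp (-l) := by
        apply mul_lt_mul_of_pos_right _ he
        linarith
    _ = 1 := by rw [← Real.exp_add]; simp

private lemma poiCDF_lt_binCDF (N k : ℕ) (hN : 1 ≤ N) (hk1 : 1 ≤ k) {t : ℝ} (ht : 0 < t) :
    poiCDF N k t < binCDF N k t := by
  rcases le_or_gt N k with hkN | hkN
  · rw [binCDF_eq_one N k hkN t]
    exact poiCDF_lt_one N k hN t ht
  -- main case k < N
  set C : ℝ := ((N-1).choose k : ℝ) with hC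
  have hCpos : (0:ℝ) < C := by
    have h : 0 < (N-1).choose k := Nat.choose_pos (by omega)
    rw [hC]
    exact_mod_cast h
  have hNpos : (0:ℝ) < N := by exact_mod_cast Nat.pos_of_ne_zero (by omega)
  have hfk : (0:ℝ) < (Nat.factorial k : ℝ) := by positivity
  set f : ℝ → ℝ := fun u => binCDF N k u - poiCDF N k u with hfdef
  have hder : ∀ u : ℝ, HasDerivAt f
      ((N:ℝ) * Real.exp (-((N:ℝ)*u)) *
        (((N:ℝ)*u)^k / (Nat.factorial k) - C * (Real.exp u - 1)^k)) u := by
    intro u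
    have h1 := (hasDerivAt_binCDF N k hkN u).sub (hasDerivAt_poiCDF N k u)
    refine h1.congr_deriv (Eq.symm ?_)
    have hq : (1 - Real.exp (-u)) = Real.exp (-u) * (Real.exp u - 1) := by
      rw [Real.exp_neg]
      field_simp
    have hqN : Real.exp (-u) ^ k * Real.exp (-u) ^ (N-k) = Real.exp (-((N:ℝ)*u)) := by
      rw [← pow_add]
      have hsum : k + (N - k) = N := by omega
      rw [hsum, ← Real.exp_nat_mul]
      ring_nf
    have hrw : C * ((1 - Real.exp (-u))^k * Real.exp (-u)^(N-k))
        = C * ((Real.exp u - 1)^k * Real.exp (-((N:ℝ)*u))) := by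
      rw [hq, mul_pow, ← hqN]
      ring
    linear_combination (N:ℝ) * hrw
  have hcont : Continuous f :=
    (Differentiable.continuous (fun u => (hder u).differentiableAt))
  have key : ∀ u : ℝ, 0 < u →
      ((Nat.factorial k : ℝ) * C * (Real.exp u - 1)^k < ((N:ℝ)*u)^k →
        0 < deriv f u) ∧
      (((N:ℝ)*u)^k < (Nat.factorial k : ℝ) * C * (Real.exp u - 1)^k →
        deriv f u < 0) := by
    intro u hu
    rw [(hder u).deriv]
    constructor
    · intro h
      have h2 : C * (Real.exp u - 1)^k < ((N:ℝ)*u)^k / (Nat.factorial k) := by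
        rw [lt_div_iff₀ hfk]; nlinarith
      have : 0 < ((N:ℝ)*u)^k / (Nat.factorial k) - C * (Real.exp u - 1)^k := by linarith
      positivity
    · intro h
      have h2 : ((N:ℝ)*u)^k / (Nat.factorial k) < C * (Real.exp u - 1)^k := by
        rw [div_lt_iff₀ hfk]; nlinarith
      have hneg : ((N:ℝ)*u)^k / (Nat.factorial k) - C * (Real.exp u - 1)^k < 0 := by linarith
      have hpos : (0:ℝ) < (N:ℝ) * Real.exp (-((N:ℝ)*u)) := by positivity
      exact mul_neg_of_pos_of_neg hpos hneg
  have hexp : ∀ u : ℝ, 0 < u → 0 < Real.exp u - 1 := by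
    intro u hu
    have := Real.one_lt_exp_iff.2 hu
    linarith
  by_cases hcase : (Nat.factorial k : ℝ) * C * (Real.exp t - 1)^k ≤ ((N:ℝ)*t)^k
  · -- f strictly increasing on [0, t]
    have hmono : StrictMonoOn f (Set.Icc 0 t) := by
      apply strictMonoOn_of_deriv_pos (convex_Icc 0 t) hcont.continuousOn
      intro u hu
      rw [interior_Icc] at hu
      obtain ⟨hu0, hut⟩ := hu
      apply (key u hu0).1
      have hch := exp_chord hu0 hut
      have het : 0 < Real.exp u - 1 := hexp u hu0
      have hpow : (Real.exp u - 1)^k < (u/t * (Real.exp t - 1))^k :=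
        pow_lt_pow_left₀ hch het.le (by omega)
      have hut' : 0 < u / t := by positivity
      calc (Nat.factorial k : ℝ) * C * (Real.exp u - 1)^k
          < (Nat.factorial k : ℝ) * C * ((u/t) * (Real.exp t - 1))^k := by
            apply mul_lt_mul_of_pos_left hpow (by positivity)
        _ = (u/t)^k * ((Nat.factorial k : ℝ) * C * (Real.exp t - 1)^k) := by
            rw [mul_pow]; ring
        _ ≤ (u/t)^k * ((N:ℝ)*t)^k := by
            apply mul_le_mul_of_nonneg_left hcase (by positivity)
        _ = ((N:ℝ)*u)^k := by
            rw [← mul_pow]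
            congr 1
            field_simp
    have h0t : f 0 < f t := hmono (Set.left_mem_Icc.2 ht.le) (Set.right_mem_Icc.2 ht.le) ht
    have hf0 : f 0 = 0 := by
      simp only [hfdef, binCDF_zero, poiCDF_zero, sub_self]
    have : 0 < f t := by linarith
    simpa [hfdef, sub_pos] using this
  · push_neg at hcase
    have hanti : StrictAntiOn f (Set.Ici t) := by
      apply strictAntiOn_of_deriv_neg (convex_Ici t) hcont.continuousOn
      intro u hu
      rw [interior_Ici] at hu
      have hu0 : 0 < u := ht.trans hu
      apply (key u hu0).2
      have hch := exp_chord ht hu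
      have het : 0 < Real.exp t - 1 := hexp t ht
      have hpow : (Real.exp t - 1)^k < (t/u * (Real.exp u - 1))^k :=
        pow_lt_pow_left₀ hch het.le (by omega)
      have htu : 0 < t / u := by positivity
      have h1 : ((N:ℝ)*t)^k < (Nat.factorial k : ℝ) * C * ((t/u) * (Real.exp u - 1))^k := by
        calc ((N:ℝ)*t)^k < (Nat.factorial k : ℝ) * C * (Real.exp t - 1)^k := hcase
          _ < (Nat.factorial k : ℝ) * C * ((t/u) * (Real.exp u - 1))^k := by
              apply mul_lt_mul_of_pos_left hpow (by positivity)
      have h2 : ((N:ℝ)*u)^k = (u/t)^k * ((N:ℝ)*t)^k := by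
        rw [← mul_pow]
        congr 1
        field_simp
      have h3 : (u/t)^k * ((Nat.factorial k : ℝ) * C * ((t/u) * (Real.exp u - 1))^k)
          = (Nat.factorial k : ℝ) * C * (Real.exp u - 1)^k := by
        rw [mul_pow]
        have : (u/t)^k * (t/u)^k = 1 := by
          rw [← mul_pow]
          rw [show u/t * (t/u) = 1 by field_simp]
          simp
        calc (u/t)^k * ((Nat.factorial k : ℝ) * C * ((t/u)^k * (Real.exp u - 1)^k))
            = ((u/t)^k * (t/u)^k) * ((Nat.factorial k : ℝ) * C * (Real.exp u - 1)^k) := by ring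
          _ = (Nat.factorial k : ℝ) * C * (Real.exp u - 1)^k := by rw [this]; ring
      calc ((N:ℝ)*u)^k = (u/t)^k * ((N:ℝ)*t)^k := h2
        _ < (u/t)^k * ((Nat.factorial k : ℝ) * C * ((t/u) * (Real.exp u - 1))^k) := by
            apply mul_lt_mul_of_pos_left h1 (by positivity)
        _ = (Nat.factorial k : ℝ) * C * (Real.exp u - 1)^k := h3
    have hlim : Tendsto f atTop (𝓝 0) := by
      have := (tendsto_binCDF N k hkN).sub (tendsto_poiCDF N k hN)
      simpa using this
    have h1 : 0 ≤ f (t+1) := by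
      apply le_of_tendsto hlim
      filter_upwards [eventually_ge_atTop (t+1)] with u hu
      rcases eq_or_lt_of_le hu with h | h
      · exact le_of_eq (congrArg f h.symm)
      · exact (hanti (Set.mem_Ici.2 (by linarith)) (Set.mem_Ici.2 (by linarith)) h).le
    have h2 : f (t+1) < f t :=
      hanti (Set.mem_Ici.2 le_rfl) (Set.mem_Ici.2 (by linarith)) (by linarith)
    have : 0 < f t := by linarith
    simpa [hfdef, sub_pos] using this

/-- CDF dominance of `U = N − Binomial(N, v₂/v₁)` (i.e. `U ~ Binomial(N, 1 − v₂/v₁)`)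
over a Poisson variable `V` with mean `N·ln(v₁/v₂)`: the CDFs agree at `0` and the
CDF of `U` is strictly larger at every `k ≥ 1`. -/
theorem binomial_failures_cdf_dominates_poisson (N : ℕ) (hN : 1 ≤ N)
    (v₁ v₂ : ℝ) (hv₂ : 0 < v₂) (hv : v₂ < v₁) :
    (∑ i ∈ Finset.range (0 + 1),
        (N.choose i : ℝ) * (1 - v₂ / v₁) ^ i * (v₂ / v₁) ^ (N - i)) =
      (∑ i ∈ Finset.range (0 + 1),
        ((N : ℝ) * Real.log (v₁ / v₂)) ^ i / (Nat.factorial i) *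
          Real.exp (-((N : ℝ) * Real.log (v₁ / v₂)))) ∧
    ∀ k : ℕ, 1 ≤ k →
      (∑ i ∈ Finset.range (k + 1),
        ((N : ℝ) * Real.log (v₁ / v₂)) ^ i / (Nat.factorial i) *
          Real.exp (-((N : ℝ) * Real.log (v₁ / v₂)))) <
      (∑ i ∈ Finset.range (k + 1),
        (N.choose i : ℝ) * (1 - v₂ / v₁) ^ i * (v₂ / v₁) ^ (N - i)) := by
  have hv₁ : 0 < v₁ := hv₂.trans hv
  set t : ℝ := Real.log (v₁ / v₂) with htdef
  have ht : 0 < t := Real.log_pos ((one_lt_div hv₂).2 hv)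
  have hq : v₂ / v₁ = Real.exp (-t) := by
    rw [htdef, ← Real.log_inv, inv_div, Real.exp_log (by positivity)]
  constructor
  · have hb : (∑ i ∈ Finset.range (0 + 1),
        (N.choose i : ℝ) * (1 - v₂ / v₁) ^ i * (v₂ / v₁) ^ (N - i)) = binCDF N 0 t := by
      unfold binCDF
      rw [hq]
    have hp : (∑ i ∈ Finset.range (0 + 1),
        ((N : ℝ) * t) ^ i / (Nat.factorial i) * Real.exp (-((N : ℝ) * t))) = poiCDF N 0 t := rfl
    rw [hb, hp]
    unfold binCDF poiCDF
    rw [Finset.sum_range_one, Finset.sum_range_one]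
    simp only [Nat.choose_zero_right, Nat.cast_one, pow_zero, Nat.sub_zero,
      Nat.factorial_zero, one_mul, Nat.cast_one, div_one]
    rw [← Real.exp_nat_mul]
    congr 1
    ring
  · intro k hk
    have hb : (∑ i ∈ Finset.range (k + 1),
        (N.choose i : ℝ) * (1 - v₂ / v₁) ^ i * (v₂ / v₁) ^ (N - i)) = binCDF N k t := by
      unfold binCDF
      rw [hq]
    have hp : (∑ i ∈ Finset.range (k + 1),
        ((N : ℝ) * t) ^ i / (Nat.factorial i) * Real.exp (-((N : ℝ) * t))) = poiCDF N k t := rfl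
    rw [hb, hp]
    exact poiCDF_lt_binCDF N k hN hk ht
end
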